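/- Let G be a finite tripartite simple graph with vertex parts A, B, C (each part is an independent set), and let p ≥ 2 be an integer. Define the graph G′ on vertex set A ⊔ (B × {1,…,p}) ⊔ C, where: a ∈ A and (b,i) are adjacent in G′ iff a and b are adjacent in G; (b,i) and c ∈ C are adjacent in G′ iff b and c are adjacent in G; a ∈ A and c ∈ C are adjacent in G′ iff they are adjacent in G; and no two vertices of B × {1,…,p} are adjacent. Then: (i) G′ is tripartite with parts A, B × {1,…,p}, C, and in particular contains no clique on 4 vertices; (ii) if G contains no triangle, then G′ contains no induced diamond; (iii) if G contains a triangle (a,b,c) with a ∈ A, b ∈ B, c ∈ C, then for every pair of distinct indices i, j the set {a,(b,i),c,(b,j)} is an induced diamond of G′ (the only non-adjacent pair being {(b,i),(b,j)}), so G′ contains at least p(p−1)/2 induced diamonds. -/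

import Mathlib

/-- An induced diamond in `G`: four distinct vertices `a, b, c, d` such that all pairs
among them are edges of `G` except exactly the pair `{c, d}`. -/
def IsDiamond {V : Type*} (G : SimpleGraph V) (a b c d : V) : Prop :=
  a ≠ b ∧ a ≠ c ∧ a ≠ d ∧ b ≠ c ∧ b ≠ d ∧ c ≠ d ∧
    G.Adj a b ∧ G.Adj a c ∧ G.Adj a d ∧ G.Adj b c ∧ G.Adj b d ∧ ¬ G.Adj c d

variable {V : Type*}

/-- The part (side) of a vertex of the blown-up graph: `0` for `A`, `1` for
`B × Fin p`, `2` for `C`. -/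
def bside (A B C : Finset V) (p : ℕ) : (↥A ⊕ (↥B × Fin p ⊕ ↥C)) → Fin 3
  | Sum.inl _ => 0
  | Sum.inr (Sum.inl _) => 1
  | Sum.inr (Sum.inr _) => 2

/-- The projection of a vertex of the blown-up graph to the original vertex set. -/
def bproj (A B C : Finset V) (p : ℕ) : (↥A ⊕ (↥B × Fin p ⊕ ↥C)) → V
  | Sum.inl a => a.1
  | Sum.inr (Sum.inl bi) => bi.1.1
  | Sum.inr (Sum.inr c) => c.1

/-- The graph `G′` on `A ⊔ (B × {1,…,p}) ⊔ C`: vertices in distinct parts are adjacent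
iff their projections are adjacent in `G`; vertices in the same part are never
adjacent (in particular no two copies `(b,i)`, `(b,j)` are adjacent). -/
def blowup (G : SimpleGraph V) (A B C : Finset V) (p : ℕ) :
    SimpleGraph (↥A ⊕ (↥B × Fin p ⊕ ↥C)) where
  Adj x y := bside A B C p x ≠ bside A B C p y ∧ G.Adj (bproj A B C p x) (bproj A B C p y)
  symm := ⟨fun x y h => ⟨h.1.symm, h.2.symm⟩⟩
  loopless := ⟨fun x h => h.1 rfl⟩

open Classical in
theorem stmt15 [Fintype V] [DecidableEq V] (G : SimpleGraph V)
    (A B C : Finset V) (p : ℕ) (hp : 2 ≤ p)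
    (hcover : A ∪ B ∪ C = Finset.univ)
    (hAB : Disjoint A B) (hAC : Disjoint A C) (hBC : Disjoint B C)
    (hA : ∀ u ∈ A, ∀ v ∈ A, ¬ G.Adj u v)
    (hB : ∀ u ∈ B, ∀ v ∈ B, ¬ G.Adj u v)
    (hC : ∀ u ∈ C, ∀ v ∈ C, ¬ G.Adj u v) :
    -- (i) G′ is tripartite (every edge joins distinct parts), hence has no 4-clique
    ((∀ x y, (blowup G A B C p).Adj x y → bside A B C p x ≠ bside A B C p y) ∧
      ¬ ∃ w x y z : ↥A ⊕ (↥B × Fin p ⊕ ↥C),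
          (blowup G A B C p).Adj w x ∧ (blowup G A B C p).Adj w y ∧
          (blowup G A B C p).Adj w z ∧ (blowup G A B C p).Adj x y ∧
          (blowup G A B C p).Adj x z ∧ (blowup G A B C p).Adj y z) ∧
    -- (ii) if G is triangle-free then G′ has no induced diamond
    ((¬ ∃ x y z : V, G.Adj x y ∧ G.Adj x z ∧ G.Adj y z) →
      ¬ ∃ a b c d, IsDiamond (blowup G A B C p) a b c d) ∧
    -- (iii) a triangle of G with a ∈ A, b ∈ B, c ∈ C gives, for all i ≠ j, the induced
    -- diamond {a, (b,i), c, (b,j)} (missing pair the two copies of b), so G′ has at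
    -- least p(p-1)/2 induced diamonds
    (∀ (a : ↥A) (b : ↥B) (c : ↥C),
      G.Adj a.1 b.1 → G.Adj b.1 c.1 → G.Adj a.1 c.1 →
      (∀ i j : Fin p, i ≠ j →
        IsDiamond (blowup G A B C p) (Sum.inl a) (Sum.inr (Sum.inr c))
          (Sum.inr (Sum.inl (b, i))) (Sum.inr (Sum.inl (b, j)))) ∧
      p * (p - 1) / 2 ≤
        ((Finset.univ.powersetCard 4).filter
          (fun s : Finset (↥A ⊕ (↥B × Fin p ⊕ ↥C)) =>
            ∃ a' b' c' d', s = {a', b', c', d'} ∧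
              IsDiamond (blowup G A B C p) a' b' c' d')).card) := by

  classical
  refine ⟨⟨fun x y h => h.1, ?_⟩, ?_, ?_⟩
  · rintro ⟨w, x, y, z, h1, h2, h3, h4, h5, h6⟩
    have e1 := h1.1; have e2 := h2.1; have e3 := h3.1
    have e4 := h4.1; have e5 := h5.1; have e6 := h6.1
    have v1 : (bside A B C p w).val ≠ (bside A B C p x).val := fun h => e1 (Fin.ext h)
    have v2 : (bside A B C p w).val ≠ (bside A B C p y).val := fun h => e2 (Fin.ext h)
    have v3 : (bside A B C p w).val ≠ (bside A B C p z).val := fun h => e3 (Fin.ext h)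
    have v4 : (bside A B C p x).val ≠ (bside A B C p y).val := fun h => e4 (Fin.ext h)
    have v5 : (bside A B C p x).val ≠ (bside A B C p z).val := fun h => e5 (Fin.ext h)
    have v6 : (bside A B C p y).val ≠ (bside A B C p z).val := fun h => e6 (Fin.ext h)
    have b1 := (bside A B C p w).isLt
    have b2 := (bside A B C p x).isLt
    have b3 := (bside A B C p y).isLt
    have b4 := (bside A B C p z).isLt
    omega
  · rintro htf ⟨a, b, c, d, hd⟩
    exact htf ⟨bproj A B C p a, bproj A B C p b, bproj A B C p c,
      hd.2.2.2.2.2.2.1.2, hd.2.2.2.2.2.2.2.1.2, hd.2.2.2.2.2.2.2.2.2.1.2⟩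
  · intro a b c hab hbc hac
    have hdia : ∀ i j : Fin p, i ≠ j →
        IsDiamond (blowup G A B C p) (Sum.inl a) (Sum.inr (Sum.inr c))
          (Sum.inr (Sum.inl (b, i))) (Sum.inr (Sum.inl (b, j))) := by
      intro i j hij
      refine ⟨by simp, by simp, by simp, by simp, by simp,
        by simp [hij, Prod.ext_iff], ?_, ?_, ?_, ?_, ?_, ?_⟩
      · exact ⟨by simp [bside], hac⟩
      · exact ⟨by simp [bside], hab⟩
      · exact ⟨by simp [bside], hab⟩
      · exact ⟨by simp [bside], hbc.symm⟩
      · exact ⟨by simp [bside], hbc.symm⟩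
      · intro h; exact h.1 rfl
    refine ⟨hdia, ?_⟩
    set W := ↥A ⊕ (↥B × Fin p ⊕ ↥C)
    set f : Finset (Fin p) → Finset W := fun s =>
      insert (Sum.inl a) (insert (Sum.inr (Sum.inr c))
        (s.image (fun i => Sum.inr (Sum.inl (b, i)))))
    have hinj : Set.InjOn f ((Finset.univ.powersetCard 2 : Finset (Finset (Fin p))) : Set (Finset (Fin p))) := by
      intro s _ t _ hst
      have key : ∀ s t : Finset (Fin p), f s = f t → s ⊆ t := by
        intro s t h i hi
        have hm : (Sum.inr (Sum.inl (b, i)) : W) ∈ f t := by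
          rw [← h]
          exact Finset.mem_insert_of_mem (Finset.mem_insert_of_mem
            (Finset.mem_image_of_mem _ hi))
        rcases Finset.mem_insert.mp hm with h1 | h1
        · exact absurd h1 (by simp)
        rcases Finset.mem_insert.mp h1 with h2 | h2
        · exact absurd h2 (by simp)
        obtain ⟨i', hi', he⟩ := Finset.mem_image.mp h2
        simp only [Sum.inr.injEq, Sum.inl.injEq, Prod.mk.injEq] at he
        exact he.2 ▸ hi'
      exact Finset.Subset.antisymm (key s t hst) (key t s hst.symm)
    have hmaps : ∀ s ∈ (Finset.univ.powersetCard 2 : Finset (Finset (Fin p))),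
        f s ∈ ((Finset.univ.powersetCard 4).filter
          (fun s : Finset W =>
            ∃ a' b' c' d', s = {a', b', c', d'} ∧
              IsDiamond (blowup G A B C p) a' b' c' d')) := by
      intro s hs
      rw [Finset.mem_powersetCard] at hs
      obtain ⟨i, j, hij, rfl⟩ := Finset.card_eq_two.mp hs.2
      have hd := hdia i j hij
      have hfeq : f {i, j} = ({Sum.inl a, Sum.inr (Sum.inr c),
          Sum.inr (Sum.inl (b, i)), Sum.inr (Sum.inl (b, j))} : Finset W) := by
        simp [f, Finset.image_insert, Finset.image_singleton]
      rw [Finset.mem_filter, hfeq]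
      refine ⟨?_, _, _, _, _, rfl, hd⟩
      rw [Finset.mem_powersetCard]
      refine ⟨Finset.subset_univ _, ?_⟩
      obtain ⟨n1, n2, n3, n4, n5, n6, -⟩ := hd
      rw [Finset.card_insert_of_notMem (by simp [n1, n2, n3]),
        Finset.card_insert_of_notMem (by simp [n4, n5]),
        Finset.card_insert_of_notMem (by simp [n6]), Finset.card_singleton]
    calc p * (p - 1) / 2 = p.choose 2 := (Nat.choose_two_right p).symm
      _ = ((Finset.univ.powersetCard 2 : Finset (Finset (Fin p)))).card := by
          simp [Finset.card_powersetCard]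
      _ ≤ _ := Finset.card_le_card_of_injOn f hmaps hinj
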